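/- Let $R$ be real symmetric positive definite, $I$ real symmetric ($n \times n$), and let $B$ be a real positive semidefinite symmetric matrix with unit diagonal. Then for every diagonal index $k$, $\big[(B \circ I)(B \circ R)^{-1}(B \circ I)\big]_{kk} \leq \big[I R^{-1} I\big]_{kk}$. -/

import Mathlib

open Matrix

open scoped Matrix in
/-- quadratic form of a Hadamard product, after decomposing `A = Cᴴ * C`. -/
private lemma hadamard_quadform_eq {n : Type*} [Fintype n] (C B : Matrix n n ℝ) (x : n → ℝ) :
    x ⬝ᵥ ((Cᴴ * C) ⊙ B) *ᵥ x =
      ∑ k, (fun i => C k i * x i) ⬝ᵥ B *ᵥ (fun i => C k i * x i) := by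
  calc x ⬝ᵥ ((Cᴴ * C) ⊙ B) *ᵥ x
      = ∑ i, ∑ j, ∑ k, C k i * x i * (B i j * (C k j * x j)) := by
        simp only [dotProduct, mulVec, hadamard_apply, mul_apply, conjTranspose_apply,
          star_trivial, Finset.sum_mul, Finset.mul_sum]
        exact Finset.sum_congr rfl fun i _ => Finset.sum_congr rfl fun j _ =>
          Finset.sum_congr rfl fun k _ => by ring
    _ = ∑ i, ∑ k, ∑ j, C k i * x i * (B i j * (C k j * x j)) :=
        Finset.sum_congr rfl fun i _ => Finset.sum_comm
    _ = ∑ k, ∑ i, ∑ j, C k i * x i * (B i j * (C k j * x j)) := Finset.sum_comm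
    _ = ∑ k, (fun i => C k i * x i) ⬝ᵥ B *ᵥ (fun i => C k i * x i) := by
        simp only [dotProduct, mulVec, Finset.mul_sum]

open scoped Matrix in
/-- Schur product theorem over ℝ. -/
private lemma hadamard_posSemidef_real {n : Type*} [Fintype n] {A B : Matrix n n ℝ}
    (hA : A.PosSemidef) (hB : B.PosSemidef) : (A ⊙ B).PosSemidef := by
  obtain ⟨C, rfl⟩ : ∃ C : Matrix n n ℝ, A = Cᴴ * C := by
    classical
    open scoped MatrixOrder in
    exact CStarAlgebra.nonneg_iff_eq_star_mul_self.mp hA.nonneg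
  refine .of_dotProduct_mulVec_nonneg ?_ fun x => ?_
  · have h : ((Cᴴ * C) ⊙ B)ᴴ = (Cᴴ * C)ᴴ ⊙ Bᴴ := by
      ext i j
      simp only [conjTranspose_apply, hadamard_apply, star_mul', star_trivial]
      try ring
    rw [Matrix.IsHermitian, h, hB.1, (Matrix.posSemidef_conjTranspose_mul_self C).1]
  · simp only [star_trivial]
    rw [hadamard_quadform_eq]
    exact Finset.sum_nonneg fun k _ => by simpa using hB.dotProduct_mulVec_nonneg (fun i => C k i * x i)

open scoped Matrix in
/-- Hadamard product of a psd matrix with unit diagonal and a positive definite matrix is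
positive definite. -/
private lemma hadamard_posDef_real {n : Type*} [Fintype n] {B R : Matrix n n ℝ}
    (hB : B.PosSemidef) (hBdiag : ∀ i, B i i = 1) (hR : R.PosDef) : (B ⊙ R).PosDef := by
  obtain ⟨C, hC⟩ : ∃ C : Matrix n n ℝ, B = Cᴴ * C := by
    classical
    open scoped MatrixOrder in
    exact CStarAlgebra.nonneg_iff_eq_star_mul_self.mp hB.nonneg
  refine .of_dotProduct_mulVec_pos (hadamard_posSemidef_real hB hR.posSemidef).1 fun x hx => ?_
  simp only [star_trivial]
  rw [hC, hadamard_quadform_eq]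
  obtain ⟨i₀, hi₀⟩ := Function.ne_iff.mp hx
  have hdiag : (∑ k, C k i₀ * C k i₀) = 1 := by
    have := hBdiag i₀
    rw [hC] at this
    simpa [mul_apply, conjTranspose_apply] using this
  have hex : ∃ k₀ : n, C k₀ i₀ ≠ 0 := by
    by_contra h
    push_neg at h
    simp [h] at hdiag
  obtain ⟨k₀, hk₀⟩ := hex
  refine Finset.sum_pos' (fun k _ => by simpa using hR.posSemidef.dotProduct_mulVec_nonneg (fun i => C k i * x i))
    ⟨k₀, Finset.mem_univ _, ?_⟩
  have hy : (fun i => C k₀ i * x i) ≠ 0 := by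
    intro h
    have := congrFun h i₀
    simp only [Pi.zero_apply, mul_eq_zero] at this
    tauto
  simpa using hR.dotProduct_mulVec_pos (x := fun i => C k₀ i * x i) hy

/-- Diagonal entries of `(B∘I)(B∘R)⁻¹(B∘I)` are dominated by those of `I R⁻¹ I`,
for `R` real positive definite, `I` real symmetric, and `B` positive semidefinite with
unit diagonal. -/
theorem hadamard_schur_diagonal_bound {n : Type*} [Fintype n] [DecidableEq n]
    (R I B : Matrix n n ℝ) (hR : R.PosDef) (hI : I.IsHermitian)
    (hB : B.PosSemidef) (hBdiag : ∀ i, B i i = 1) :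
    ∀ k, (Matrix.hadamard B I * (Matrix.hadamard B R)⁻¹ * Matrix.hadamard B I) k k ≤
      (I * R⁻¹ * I) k k := by
  intro k
  haveI := hR.isUnit.invertible
  set D := I * R⁻¹ * I with hD
  -- the block matrix [[R, I], [Iᴴ, I R⁻¹ I]] is psd
  have hblock : (fromBlocks R I Iᴴ D).PosSemidef := by
    rw [Matrix.PosDef.fromBlocks₁₁ _ _ hR, hI.eq, hD, sub_self]
    exact Matrix.PosSemidef.zero
  -- the block matrix [[B, B], [B, B]] is psd
  have hBB : (fromBlocks B B B B).PosSemidef := by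
    have h := hB.conjTranspose_mul_mul_same (fromCols (1 : Matrix n n ℝ) (1 : Matrix n n ℝ))
    have heq : (fromCols (1 : Matrix n n ℝ) (1 : Matrix n n ℝ))ᴴ * B * fromCols (1 : Matrix n n ℝ) (1 : Matrix n n ℝ) =
        fromBlocks B B B B := by
      rw [conjTranspose_fromCols_eq_fromRows_conjTranspose, Matrix.fromRows_mul,
        fromRows_mul_fromCols]
      simp
    rwa [heq] at h
  -- Hadamard of block matrices
  have hhad : Matrix.hadamard (fromBlocks B B B B) (fromBlocks R I Iᴴ D) =
      fromBlocks (Matrix.hadamard B R) (Matrix.hadamard B I)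
        (Matrix.hadamard B Iᴴ) (Matrix.hadamard B D) := by
    ext (i | i) (j | j) <;> rfl
  have hbig := hadamard_posSemidef_real hBB hblock
  rw [hhad] at hbig
  -- rewrite B ⊙ Iᴴ as (B ⊙ I)ᴴ
  have hBI : (Matrix.hadamard B I)ᴴ = Matrix.hadamard B Iᴴ := by
    ext i j
    have hb : B j i = B i j := by
      conv_lhs => rw [← hB.1]
      rw [conjTranspose_apply, star_trivial]
    simp only [conjTranspose_apply, hadamard_apply, star_mul', star_trivial]
    rw [hb, mul_comm]
  rw [← hBI] at hbig
  -- B ⊙ R is positive definite, hence invertible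
  have hBR : (Matrix.hadamard B R).PosDef := hadamard_posDef_real hB hBdiag hR
  haveI := hBR.isUnit.invertible
  -- Schur complement is psd
  have hschur := (Matrix.PosDef.fromBlocks₁₁ _ _ hBR).mp hbig
  -- diagonal entries of psd matrices are nonneg
  have hk : 0 ≤ (Matrix.hadamard B D - (Matrix.hadamard B I)ᴴ * (Matrix.hadamard B R)⁻¹ *
      Matrix.hadamard B I) k k := by
    have h2 := hschur.dotProduct_mulVec_nonneg (Pi.single k 1)
    simpa [mulVec_single, dotProduct_single] using h2
  rw [Matrix.sub_apply, hBI] at hk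
  have hIH : Matrix.hadamard B Iᴴ = Matrix.hadamard B I := by rw [hI.eq]
  rw [hIH] at hk
  have hBD : Matrix.hadamard B D k k = D k k := by simp [hBdiag k]
  rw [hBD] at hk
  linarith
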